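/- Closed form for odd-index generating functions: for every natural number n and every real t with −1 ≤ t ≤ 1, φ_{2n+1}(t) = (1+t²)^n · (√(1+t²) + t·∑_{k=0}^{n} (C(2k,k)/4^k)·(1+t²)^{−k}). -/

import Mathlib

open scoped Real Classical

/-- The generalized β-binomial coefficient `[n k]_β`:
`Γ(βn+1)/(Γ(βk+1)·Γ(β(n−k)+1))` when `β(n−k)` is not an integer `≤ -1`, else `0`. -/
noncomputable def bbinom (β : ℝ) (n : ℕ) (k : ℤ) : ℝ :=
  if ∃ m : ℤ, m ≤ -1 ∧ β * ((n : ℝ) - (k : ℝ)) = (m : ℝ) then 0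
  else Real.Gamma (β * n + 1) /
    (Real.Gamma (β * k + 1) * Real.Gamma (β * ((n : ℝ) - (k : ℝ)) + 1))

/-- The 1/2-binomial coefficient. -/
noncomputable def bhalf (n : ℕ) (k : ℤ) : ℝ := bbinom (1/2) n k

/-- The generating function φ_n(t) = ∑_{k=0}^∞ [n k] t^k. -/
noncomputable def phi (n : ℕ) (t : ℝ) : ℝ := ∑' k : ℕ, bhalf n (k : ℤ) * t ^ k

namespace PhiAux

/-- central binomial over 4^k -/
noncomputable def cc (k : ℕ) : ℝ := (Nat.centralBinom k : ℝ) / 4 ^ k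

lemma cc_zero : cc 0 = 1 := by simp [cc, Nat.centralBinom]

lemma cc_pos (k : ℕ) : 0 < cc k :=
  div_pos (by exact_mod_cast Nat.centralBinom_pos k) (by positivity)

lemma cc_succ (k : ℕ) : cc (k + 1) = cc k * (2 * k + 1) / (2 * k + 2) := by
  have h := Nat.succ_mul_centralBinom_succ k
  have h' : ((k:ℝ) + 1) * (Nat.centralBinom (k+1) : ℝ)
      = 2 * (2 * k + 1) * (Nat.centralBinom k : ℝ) := by exact_mod_cast h
  have hk : ((k:ℝ) + 1) ≠ 0 := by positivity
  have h4 : (4:ℝ)^(k+1) = 4^k * 4 := by ring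
  rw [cc, cc, h4]
  rw [div_mul_eq_mul_div, div_div, div_eq_div_iff (by positivity) (by positivity)]
  have e1 : (Nat.centralBinom (k+1) : ℝ) = 2 * (2 * k + 1) * (Nat.centralBinom k : ℝ) / (k+1) := by
    field_simp at h' ⊢; linarith [h']
  rw [e1]; field_simp; ring

lemma cc_succ_le (k : ℕ) : cc (k + 1) ≤ cc k := by
  rw [cc_succ]
  rw [div_le_iff₀ (by positivity)]
  nlinarith [cc_pos k]

lemma cc_le_one (k : ℕ) : cc k ≤ 1 := by
  induction k with
  | zero => simp [cc_zero]
  | succ n ih => exact (cc_succ_le n).trans ih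

lemma Gamma_half (m : ℕ) :
    Real.Gamma ((m : ℝ) + 1/2) = cc m * m.factorial * Real.sqrt π := by
  induction m with
  | zero =>
    simp only [Nat.cast_zero, zero_add, cc_zero, Nat.factorial_zero, Nat.cast_one, one_mul]
    rw [show (1:ℝ)/2 = 1/2 from rfl, Real.Gamma_one_half_eq]
  | succ n ih =>
    have h : ((n:ℝ) + 1) + 1/2 = ((n:ℝ) + 1/2) + 1 := by ring
    push_cast
    rw [h, Real.Gamma_add_one (by positivity), ih, cc_succ]
    push_cast [Nat.factorial_succ]
    field_simp

end PhiAux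


namespace PhiAux

lemma cond_iff (n : ℕ) (k : ℤ) :
    (∃ m : ℤ, m ≤ -1 ∧ (1/2 : ℝ) * ((n : ℝ) - (k : ℝ)) = (m : ℝ)) ↔
      ((2 : ℤ) ∣ ((n : ℤ) - k) ∧ (n : ℤ) - k ≤ -2) := by
  constructor
  · rintro ⟨m, hm, he⟩
    have h2 : (n : ℝ) - (k : ℝ) = 2 * m := by linarith
    have h3 : (n : ℤ) - k = 2 * m := by exact_mod_cast h2
    exact ⟨⟨m, h3⟩, by omega⟩
  · rintro ⟨⟨m, hm⟩, hle⟩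
    refine ⟨m, by omega, ?_⟩
    have : ((n : ℤ) - k : ℤ) = 2 * m := hm
    have h2 : (n : ℝ) - (k : ℝ) = 2 * (m : ℝ) := by exact_mod_cast this
    rw [h2]; ring

lemma bhalf_eq {n : ℕ} {k : ℤ} (h : ¬ ((2 : ℤ) ∣ ((n : ℤ) - k) ∧ (n : ℤ) - k ≤ -2)) :
    bhalf n k = Real.Gamma ((n : ℝ)/2 + 1) /
      (Real.Gamma ((k : ℝ)/2 + 1) * Real.Gamma (((n : ℝ) - (k : ℝ))/2 + 1)) := by
  rw [bhalf, bbinom, if_neg ((not_congr (cond_iff n k)).2 h)]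
  ring_nf

lemma bhalf_zero {n : ℕ} {k : ℤ} (h : (2 : ℤ) ∣ ((n : ℤ) - k) ∧ (n : ℤ) - k ≤ -2) :
    bhalf n k = 0 := by
  rw [bhalf, bbinom, if_pos ((cond_iff n k).2 h)]

lemma bhalf_neg_two (m : ℕ) : bhalf (2 * m + 1) (-2) = 0 := by
  rw [bhalf_eq (by omega)]
  push_cast
  rw [show (-2 : ℝ)/2 + 1 = 0 by norm_num, Real.Gamma_zero]
  simp

lemma bhalf_neg_one (m : ℕ) : bhalf (2 * m + 1) (-1) = cc (m + 1) := by
  rw [bhalf_eq (by omega)]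
  push_cast
  have h1 : ((2 * m + 1 : ℝ))/2 + 1 = ((m + 1 : ℕ) : ℝ) + 1/2 := by push_cast; ring
  have h2 : ((-1 : ℝ))/2 + 1 = 1/2 := by norm_num
  have h3 : ((2 * m + 1 : ℝ) - (-1))/2 + 1 = ((m + 1 : ℕ) : ℝ) + 1 := by push_cast; ring
  rw [h1, h2, h3, Gamma_half, Real.Gamma_one_half_eq, Real.Gamma_nat_eq_factorial]
  have hπ : Real.sqrt π ≠ 0 := by positivity
  have h4 : ((m+1).factorial : ℝ) ≠ 0 := by positivity
  field_simp

lemma gamma_pascal {x y : ℝ} (hx1 : x + 1 ≠ 0) (hy : y ≠ 0)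
    (hxy : x - y + 1 ≠ 0) (hΓy : Real.Gamma y ≠ 0) (hΓxy : Real.Gamma (x - y + 1) ≠ 0) :
    Real.Gamma (x + 2) / (Real.Gamma (y + 1) * Real.Gamma (x - y + 2)) =
      Real.Gamma (x + 1) / (Real.Gamma (y + 1) * Real.Gamma (x - y + 1)) +
        Real.Gamma (x + 1) / (Real.Gamma y * Real.Gamma (x - y + 2)) := by
  rw [show x + 2 = (x + 1) + 1 by ring, Real.Gamma_add_one hx1,
    show x - y + 2 = (x - y + 1) + 1 by ring, Real.Gamma_add_one hxy,
    Real.Gamma_add_one hy]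
  field_simp
  ring

lemma gamma_half_int_ne_zero (a : ℤ) : Real.Gamma ((a : ℝ) + 1/2) ≠ 0 := by
  apply Real.Gamma_ne_zero
  intro m h
  have : (2 * a + 1 : ℝ) = (-(2 * m) : ℤ) := by push_cast; linarith
  have : (2 * a + 1 : ℤ) = -(2 * m) := by exact_mod_cast this
  omega

lemma bhalf_nat_eq (n k : ℕ)
    (h : ¬ ((2:ℤ) ∣ ((n : ℤ) - (k : ℤ)) ∧ (n : ℤ) - (k : ℤ) ≤ -2)) :
    bhalf n k = Real.Gamma ((n : ℝ)/2 + 1) /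
      (Real.Gamma ((k : ℝ)/2 + 1) * Real.Gamma (((n : ℝ) - (k : ℝ))/2 + 1)) := by
  rw [bhalf_eq h]; norm_num

lemma bhalf_nat_sub_two_eq (n k : ℕ)
    (h : ¬ ((2:ℤ) ∣ ((n : ℤ) - ((k : ℤ) - 2)) ∧ (n : ℤ) - ((k : ℤ) - 2) ≤ -2)) :
    bhalf n ((k : ℤ) - 2) = Real.Gamma ((n : ℝ)/2 + 1) /
      (Real.Gamma (((k : ℝ) - 2)/2 + 1) * Real.Gamma (((n : ℝ) - ((k : ℝ) - 2))/2 + 1)) := by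
  rw [bhalf_eq h]; push_cast; norm_num

lemma odd_ne_zero_half (a : ℤ) : (2 * (a : ℝ) + 1) / 2 ≠ 0 := by
  intro h
  have h1 : 2 * (a : ℝ) + 1 = 0 := by linarith [(div_eq_zero_iff.1 h)]
  have : (2 * a + 1 : ℤ) = 0 := by exact_mod_cast h1
  omega

lemma pascal (m k : ℕ) :
    bhalf (2 * m + 3) k = bhalf (2 * m + 1) k + bhalf (2 * m + 1) ((k : ℤ) - 2) := by
  rcases Nat.even_or_odd k with hk | hk
  · -- k even
    obtain ⟨j, rfl⟩ : ∃ j, k = 2 * j := by rcases hk with ⟨j, hj⟩; exact ⟨j, by omega⟩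
    have hne1 : ¬ ((2:ℤ) ∣ (((2*m+3 : ℕ) : ℤ) - ((2*j : ℕ) : ℤ)) ∧ ((2*m+3 : ℕ) : ℤ) - ((2*j:ℕ) : ℤ) ≤ -2) := by
      rintro ⟨h, -⟩; omega
    have hne2 : ¬ ((2:ℤ) ∣ (((2*m+1 : ℕ) : ℤ) - ((2*j : ℕ) : ℤ)) ∧ ((2*m+1 : ℕ) : ℤ) - ((2*j:ℕ) : ℤ) ≤ -2) := by
      rintro ⟨h, -⟩; omega
    rcases Nat.eq_zero_or_pos j with rfl | hj0
    · -- k = 0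
      have e0 : ((2 * 0 : ℕ) : ℤ) - 2 = -2 := by norm_num
      rw [e0, bhalf_neg_two, bhalf_nat_eq _ _ hne1, bhalf_nat_eq _ _ hne2]
      push_cast
      norm_num [Real.Gamma_one]
      rw [div_self (Real.Gamma_pos_of_pos (by positivity)).ne',
        div_self (Real.Gamma_pos_of_pos (by positivity)).ne']
    · -- k = 2j, j ≥ 1
      have hne3 : ¬ ((2:ℤ) ∣ (((2*m+1 : ℕ) : ℤ) - (((2*j : ℕ) : ℤ) - 2)) ∧ ((2*m+1 : ℕ) : ℤ) - (((2*j:ℕ) : ℤ) - 2) ≤ -2) := by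
        rintro ⟨h, -⟩; omega
      rw [bhalf_nat_eq _ _ hne1, bhalf_nat_eq _ _ hne2, bhalf_nat_sub_two_eq _ _ hne3]
      have key := gamma_pascal (x := (2*(m:ℝ)+1)/2) (y := (j:ℝ))
        (by positivity)
        (by exact_mod_cast Nat.cast_ne_zero.2 (by omega))
        (by
          have := odd_ne_zero_half ((m : ℤ) - (j : ℤ) + 1)
          intro h; apply this; push_cast; push_cast at h; linarith)
        (Real.Gamma_pos_of_pos (by exact_mod_cast Nat.cast_pos.2 hj0)).ne'
        (by
          have := gamma_half_int_ne_zero ((m : ℤ) - (j : ℤ) + 1)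
          intro h; apply this; convert h using 2; push_cast; ring)
      rw [show ((2*m+3 : ℕ) : ℝ)/2 + 1 = (2*(m:ℝ)+1)/2 + 2 by push_cast; ring,
        show ((2*j : ℕ) : ℝ)/2 + 1 = (j:ℝ) + 1 by push_cast; ring,
        show (((2*m+3 : ℕ) : ℝ) - ((2*j:ℕ) : ℝ))/2 + 1 = (2*(m:ℝ)+1)/2 - (j:ℝ) + 2 by push_cast; ring,
        show ((2*m+1 : ℕ) : ℝ)/2 + 1 = (2*(m:ℝ)+1)/2 + 1 by push_cast; ring,
        show (((2*m+1 : ℕ) : ℝ) - ((2*j:ℕ) : ℝ))/2 + 1 = (2*(m:ℝ)+1)/2 - (j:ℝ) + 1 by push_cast; ring,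
        show (((2*j : ℕ) : ℝ) - 2)/2 + 1 = (j:ℝ) by push_cast; ring,
        show (((2*m+1 : ℕ) : ℝ) - (((2*j:ℕ) : ℝ) - 2))/2 + 1 = (2*(m:ℝ)+1)/2 - (j:ℝ) + 2 by push_cast; ring]
      exact key
  · -- k odd
    obtain ⟨j, rfl⟩ : ∃ j, k = 2 * j + 1 := by rcases hk with ⟨j, hj⟩; exact ⟨j, by omega⟩
    rcases lt_trichotomy j (m + 1) with hjm | rfl | hjm
    · -- j ≤ m : generic case
      have hne1 : ¬ ((2:ℤ) ∣ (((2*m+3 : ℕ) : ℤ) - ((2*j+1 : ℕ) : ℤ)) ∧ ((2*m+3 : ℕ) : ℤ) - ((2*j+1:ℕ) : ℤ) ≤ -2) := by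
        rintro ⟨-, h⟩; omega
      have hne2 : ¬ ((2:ℤ) ∣ (((2*m+1 : ℕ) : ℤ) - ((2*j+1 : ℕ) : ℤ)) ∧ ((2*m+1 : ℕ) : ℤ) - ((2*j+1:ℕ) : ℤ) ≤ -2) := by
        rintro ⟨-, h⟩; omega
      have hne3 : ¬ ((2:ℤ) ∣ (((2*m+1 : ℕ) : ℤ) - (((2*j+1 : ℕ) : ℤ) - 2)) ∧ ((2*m+1 : ℕ) : ℤ) - (((2*j+1:ℕ) : ℤ) - 2) ≤ -2) := by
        rintro ⟨-, h⟩; omega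
      rw [bhalf_nat_eq _ _ hne1, bhalf_nat_eq _ _ hne2, bhalf_nat_sub_two_eq _ _ hne3]
      have key := gamma_pascal (x := (2*(m:ℝ)+1)/2) (y := (2*(j:ℝ)+1)/2)
        (by positivity)
        (by positivity)
        (by
          intro h
          have : ((m:ℝ) - (j:ℝ) + 1) = 0 := by linarith
          have : ((m:ℤ) - (j:ℤ) + 1) = 0 := by exact_mod_cast this
          omega)
        (by
          have := gamma_half_int_ne_zero (j : ℤ)
          intro h; apply this; convert h using 2; push_cast; ring)
        (by
          have : (2*(m:ℝ)+1)/2 - (2*(j:ℝ)+1)/2 + 1 = ((m - j : ℕ) : ℝ) + 1 := by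
            push_cast [Nat.cast_sub (by omega : j ≤ m)]; ring
          rw [this]
          exact (Real.Gamma_pos_of_pos (by positivity)).ne')
      rw [show ((2*m+3 : ℕ) : ℝ)/2 + 1 = (2*(m:ℝ)+1)/2 + 2 by push_cast; ring,
        show ((2*j+1 : ℕ) : ℝ)/2 + 1 = (2*(j:ℝ)+1)/2 + 1 by push_cast; ring,
        show (((2*m+3 : ℕ) : ℝ) - ((2*j+1:ℕ) : ℝ))/2 + 1 = (2*(m:ℝ)+1)/2 - (2*(j:ℝ)+1)/2 + 2 by push_cast; ring,
        show ((2*m+1 : ℕ) : ℝ)/2 + 1 = (2*(m:ℝ)+1)/2 + 1 by push_cast; ring,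
        show (((2*m+1 : ℕ) : ℝ) - ((2*j+1:ℕ) : ℝ))/2 + 1 = (2*(m:ℝ)+1)/2 - (2*(j:ℝ)+1)/2 + 1 by push_cast; ring,
        show (((2*j+1 : ℕ) : ℝ) - 2)/2 + 1 = (2*(j:ℝ)+1)/2 by push_cast; ring,
        show (((2*m+1 : ℕ) : ℝ) - (((2*j+1:ℕ) : ℝ) - 2))/2 + 1 = (2*(m:ℝ)+1)/2 - (2*(j:ℝ)+1)/2 + 2 by push_cast; ring]
      exact key
    · -- j = m + 1 : boundary
      have hz : bhalf (2*m+1) ((2*(m+1)+1 : ℕ) : ℤ) = 0 :=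
        bhalf_zero ⟨⟨-1, by push_cast; ring⟩, by push_cast; omega⟩
      rw [hz]
      have hne1 : ¬ ((2:ℤ) ∣ (((2*m+3 : ℕ) : ℤ) - ((2*(m+1)+1 : ℕ) : ℤ)) ∧ ((2*m+3 : ℕ) : ℤ) - ((2*(m+1)+1:ℕ) : ℤ) ≤ -2) := by
        rintro ⟨-, h⟩; omega
      have hne3 : ¬ ((2:ℤ) ∣ (((2*m+1 : ℕ) : ℤ) - (((2*(m+1)+1 : ℕ) : ℤ) - 2)) ∧ ((2*m+1 : ℕ) : ℤ) - (((2*(m+1)+1:ℕ) : ℤ) - 2) ≤ -2) := by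
        rintro ⟨-, h⟩; omega
      rw [bhalf_nat_eq _ _ hne1, bhalf_nat_sub_two_eq _ _ hne3]
      rw [show (((2*m+3 : ℕ) : ℝ) - ((2*(m+1)+1:ℕ) : ℝ))/2 + 1 = 1 by push_cast; ring,
        show ((2*(m+1)+1 : ℕ) : ℝ)/2 + 1 = ((2*m+3 : ℕ) : ℝ)/2 + 1 by push_cast; ring,
        show (((2*m+1 : ℕ) : ℝ) - (((2*(m+1)+1:ℕ) : ℝ) - 2))/2 + 1 = 1 by push_cast; ring,
        show (((2*(m+1)+1 : ℕ) : ℝ) - 2)/2 + 1 = ((2*m+1 : ℕ) : ℝ)/2 + 1 by push_cast; ring,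
        Real.Gamma_one]
      have g1 : Real.Gamma (((2*m+3 : ℕ) : ℝ)/2 + 1) ≠ 0 :=
        (Real.Gamma_pos_of_pos (by positivity)).ne'
      have g2 : Real.Gamma (((2*m+1 : ℕ) : ℝ)/2 + 1) ≠ 0 :=
        (Real.Gamma_pos_of_pos (by positivity)).ne'
      rw [mul_one, mul_one, div_self g1, div_self g2]
      norm_num
    · -- j ≥ m + 2 : all zero
      have h1 : bhalf (2*m+3) ((2*j+1 : ℕ) : ℤ) = 0 :=
        bhalf_zero ⟨⟨(m : ℤ) - (j : ℤ) + 1, by push_cast; ring⟩, by push_cast; omega⟩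
      have h2 : bhalf (2*m+1) ((2*j+1 : ℕ) : ℤ) = 0 :=
        bhalf_zero ⟨⟨(m : ℤ) - (j : ℤ), by push_cast; ring⟩, by push_cast; omega⟩
      have h3 : bhalf (2*m+1) (((2*j+1 : ℕ) : ℤ) - 2) = 0 :=
        bhalf_zero ⟨⟨(m : ℤ) - (j : ℤ) + 1, by push_cast; ring⟩, by push_cast; omega⟩
      rw [h1, h2, h3]; norm_num

/-- even-part coefficients of φ₁ -/
noncomputable def ee (j : ℕ) : ℝ := bhalf 1 (2 * (j : ℤ))

lemma ee_cond (j : ℕ) : ¬ ((2:ℤ) ∣ ((1 : ℤ) - 2 * (j:ℤ)) ∧ (1 : ℤ) - 2 * (j:ℤ) ≤ -2) := by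
  rintro ⟨h, -⟩; omega

lemma ee_eq (j : ℕ) : ee j = Real.Gamma (3/2) /
    (Real.Gamma ((j:ℝ) + 1) * Real.Gamma (3/2 - (j:ℝ))) := by
  rw [ee, bhalf_eq (n := 1) (k := 2 * (j:ℤ)) (by exact ee_cond j)]
  push_cast
  rw [show ((1:ℝ))/2 + 1 = 3/2 by norm_num,
    show (2*(j:ℝ))/2 + 1 = (j:ℝ) + 1 by ring,
    show ((1:ℝ) - 2*(j:ℝ))/2 + 1 = 3/2 - (j:ℝ) by ring]

lemma ee_zero' : ee 0 = 1 := by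
  rw [ee_eq]
  norm_num
  exact (Real.Gamma_pos_of_pos (by norm_num)).ne'

lemma ee_succ (j : ℕ) : ((j:ℝ) + 1) * ee (j + 1) = (1/2 - (j:ℝ)) * ee j := by
  rw [ee_eq, ee_eq]
  have hg1 : Real.Gamma ((j:ℝ) + 1 + 1) = ((j:ℝ) + 1) * Real.Gamma ((j:ℝ) + 1) :=
    Real.Gamma_add_one (by positivity)
  have hhalf : (1:ℝ)/2 - (j:ℝ) ≠ 0 := by
    intro h
    have : ((2*j - 1 : ℤ) : ℝ) = 0 := by push_cast; linarith
    have : (2*(j:ℤ) - 1) = 0 := by exact_mod_cast this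
    omega
  have hg2 : Real.Gamma (3/2 - (j:ℝ)) = (1/2 - (j:ℝ)) * Real.Gamma (1/2 - (j:ℝ)) := by
    rw [show (3:ℝ)/2 - (j:ℝ) = (1/2 - (j:ℝ)) + 1 by ring, Real.Gamma_add_one hhalf]
  have hg3 : 3/2 - ((j:ℝ) + 1) = 1/2 - (j:ℝ) := by push_cast; ring
  have hne1 : Real.Gamma ((j:ℝ) + 1) ≠ 0 := (Real.Gamma_pos_of_pos (by positivity)).ne'
  have hne2 : Real.Gamma (1/2 - (j:ℝ)) ≠ 0 := by
    have := gamma_half_int_ne_zero (-(j:ℤ))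
    intro h; apply this; convert h using 2; push_cast; ring
  have hj1 : ((j:ℝ) + 1) ≠ 0 := by positivity
  have h2j : (2:ℝ) - 4*(j:ℝ) ≠ 0 := by intro h; apply hhalf; linarith
  have h2j' : (1:ℝ) - 2*(j:ℝ) ≠ 0 := by intro h; apply hhalf; linarith
  have cancel : ∀ a c d : ℝ, a ≠ 0 → a * (c / (a * d)) = c / d := by
    intro a c d ha
    rw [div_mul_eq_div_div_swap, ← mul_div_assoc, mul_div_cancel_left₀ _ ha]
  push_cast
  rw [hg3, hg1, hg2]
  rw [mul_assoc ((j:ℝ)+1), cancel _ _ _ hj1,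
    show Real.Gamma ((j:ℝ)+1) * ((1/2-(j:ℝ)) * Real.Gamma (1/2-(j:ℝ)))
      = (1/2-(j:ℝ)) * (Real.Gamma ((j:ℝ)+1) * Real.Gamma (1/2-(j:ℝ))) from by ring,
    cancel _ _ _ hhalf]

lemma cc_diff (j : ℕ) : cc j - cc (j + 1) = cc j / (2*(j:ℝ) + 2) := by
  rw [cc_succ]
  field_simp
  ring

lemma ee_one' : ee 1 = 1/2 := by
  have := ee_succ 0
  rw [ee_zero'] at this
  push_cast at this
  linarith

lemma ee_sign (j : ℕ) : ee (j + 1) = (-1)^j * (cc j - cc (j + 1)) := by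
  induction j with
  | zero => rw [ee_one', cc_diff]; norm_num [cc_zero]
  | succ i ih =>
    have hrec := ee_succ (i + 1)
    rw [ih] at hrec
    have hi2 : ((i:ℝ) + 1 + 1) ≠ 0 := by positivity
    have he : ee (i + 1 + 1) = (1/2 - ((i:ℝ)+1)) * ((-1)^i * (cc i - cc (i+1))) / ((i:ℝ) + 1 + 1) := by
      push_cast at hrec ⊢
      field_simp
      linarith [hrec]
    rw [he, cc_diff, cc_diff, cc_succ]
    have h1 : (2*(i:ℝ) + 2) ≠ 0 := by positivity
    have h2 : (2*((i:ℝ)+1) + 2) ≠ 0 := by positivity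
    push_cast
    field_simp
    ring

lemma cc_diff_nonneg (j : ℕ) : 0 ≤ cc j - cc (j + 1) := by
  have := cc_succ_le j; linarith

lemma abs_ee_succ (j : ℕ) : |ee (j + 1)| = cc j - cc (j + 1) := by
  rw [ee_sign, abs_mul, abs_pow, abs_neg, abs_one, one_pow, one_mul,
    abs_of_nonneg (cc_diff_nonneg j)]

lemma summable_cc_diff : Summable (fun j => cc j - cc (j + 1)) := by
  apply summable_of_sum_range_le (c := cc 0) (fun n => cc_diff_nonneg n)
  intro n
  rw [Finset.sum_range_sub' (fun i => cc i)]
  have := cc_pos n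
  linarith

lemma summable_abs_ee : Summable (fun j => |ee j|) := by
  rw [← summable_nat_add_iff 1]
  exact summable_cc_diff.congr (fun j => (abs_ee_succ j).symm)



noncomputable def VV (n : ℕ) : ℝ := ∑ k ∈ Finset.range (n+1), ee k * ee (n - k)

lemma VV_mul (n : ℕ) :
    2 * ∑ k ∈ Finset.range (n+1), (k:ℝ) * (ee k * ee (n-k)) = (n:ℝ) * VV n := by
  have h := Finset.sum_range_reflect (fun k => (k:ℝ) * (ee k * ee (n-k))) (n+1)
  simp only [Nat.add_sub_cancel] at h
  rw [two_mul]
  nth_rewrite 1 [← h]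
  rw [VV, Finset.mul_sum, ← Finset.sum_add_distrib]
  apply Finset.sum_congr rfl
  intro j hj
  have hjn : j ≤ n := by simpa [Nat.lt_succ_iff] using hj
  have e1 : n - (n - j) = j := by omega
  rw [e1, Nat.cast_sub hjn]
  ring

lemma VV_rec (n : ℕ) : ((n:ℝ)+1) * VV (n+1) = (1 - (n:ℝ)) * VV n := by
  have hA : ((n:ℝ)+1) * VV (n+1)
      = 2 * ∑ k ∈ Finset.range (n+2), (k:ℝ) * (ee k * ee (n+1-k)) := by
    have h := VV_mul (n+1)
    push_cast at h ⊢
    linarith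
  rw [hA]
  have hB : ∑ k ∈ Finset.range (n+2), (k:ℝ) * (ee k * ee (n+1-k))
      = ∑ i ∈ Finset.range (n+1), ((i:ℝ)+1) * (ee (i+1) * ee (n-i)) := by
    rw [Finset.sum_range_succ' (fun k => (k:ℝ) * (ee k * ee (n+1-k))) (n+1)]
    simp only [Nat.cast_zero, zero_mul, add_zero]
    apply Finset.sum_congr rfl
    intro i _
    have e2 : n + 1 - (i+1) = n - i := by omega
    rw [e2]; push_cast; ring
  rw [hB]
  have hC : ∑ i ∈ Finset.range (n+1), ((i:ℝ)+1) * (ee (i+1) * ee (n-i))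
      = ∑ i ∈ Finset.range (n+1), (1/2 - (i:ℝ)) * (ee i * ee (n-i)) := by
    apply Finset.sum_congr rfl
    intro i _
    calc ((i:ℝ)+1) * (ee (i+1) * ee (n-i)) = (((i:ℝ)+1) * ee (i+1)) * ee (n-i) := by ring
    _ = ((1/2 - (i:ℝ)) * ee i) * ee (n-i) := by rw [ee_succ i]
    _ = (1/2 - (i:ℝ)) * (ee i * ee (n-i)) := by ring
  rw [hC]
  have hD : ∑ i ∈ Finset.range (n+1), (1/2 - (i:ℝ)) * (ee i * ee (n-i))
      = (1/2) * VV n - ∑ i ∈ Finset.range (n+1), (i:ℝ) * (ee i * ee (n-i)) := by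
    rw [VV, Finset.mul_sum, ← Finset.sum_sub_distrib]
    apply Finset.sum_congr rfl
    intro i _
    ring
  rw [hD]
  have h := VV_mul n
  linarith

lemma VV_zero : VV 0 = 1 := by simp [VV, ee_zero']

lemma VV_one : VV 1 = 1 := by
  rw [VV]
  rw [Finset.sum_range_succ, Finset.sum_range_one]
  norm_num [ee_zero', ee_one']

lemma VV_ge_two (n : ℕ) (h : 2 ≤ n) : VV n = 0 := by
  obtain ⟨m, rfl⟩ : ∃ m, n = m + 2 := ⟨n - 2, by omega⟩
  clear h
  induction m with
  | zero =>
    have h := VV_rec 1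
    rw [VV_one] at h
    norm_num at h
    exact h
  | succ i ih =>
    have e : i + 1 + 2 = i + 2 + 1 := by omega
    rw [e]
    have h := VV_rec (i + 2)
    rw [ih] at h
    have hne : ((i:ℝ) + 2 + 1) ≠ 0 := by positivity
    push_cast at h
    have h0 : ((i:ℝ) + 2 + 1) * VV (i + 2 + 1) = 0 := by rw [h]; ring
    rcases mul_eq_zero.mp h0 with h' | h'
    · exact absurd h' hne
    · exact h'

lemma cc_one : cc 1 = 1/2 := by
  simp [cc, Nat.centralBinom]
  norm_num

lemma abs_x_pow_le {x : ℝ} (h0 : -1 ≤ x) (h1 : x ≤ 1) (j : ℕ) : |x ^ j| ≤ 1 := by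
  rw [abs_pow]
  exact pow_le_one₀ (abs_nonneg x) (abs_le.mpr ⟨h0, h1⟩)

lemma summable_norm_ee_x {x : ℝ} (h0 : -1 ≤ x) (h1 : x ≤ 1) :
    Summable (fun j => ‖ee j * x ^ j‖) := by
  apply Summable.of_nonneg_of_le (fun j => norm_nonneg _) (fun j => ?_) summable_abs_ee
  rw [Real.norm_eq_abs, abs_mul]
  calc |ee j| * |x ^ j| ≤ |ee j| * 1 :=
        mul_le_mul_of_nonneg_left (abs_x_pow_le h0 h1 j) (abs_nonneg _)
  _ = |ee j| := mul_one _

lemma tail_bound {x : ℝ} (h0 : -1 ≤ x) (h1 : x ≤ 1) :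
    |∑' j, ee (j + 2) * x ^ (j + 2)| ≤ 1/2 := by
  have hs : Summable (fun j => ‖ee (j + 2) * x ^ (j + 2)‖) := by
    have := (summable_nat_add_iff (f := fun j => ‖ee j * x ^ j‖) 2).mpr
      (summable_norm_ee_x h0 h1)
    exact this
  calc |∑' j, ee (j + 2) * x ^ (j + 2)| ≤ ∑' j, ‖ee (j + 2) * x ^ (j + 2)‖ := by
        simpa using norm_tsum_le_tsum_norm hs
  _ ≤ 1/2 := by
      apply Summable.tsum_le_of_sum_range_le hs
      intro n
      have hle : ∀ j, ‖ee (j + 2) * x ^ (j + 2)‖ ≤ cc (j+1) - cc (j+2) := by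
        intro j
        rw [Real.norm_eq_abs, abs_mul]
        calc |ee (j+2)| * |x ^ (j+2)| ≤ |ee (j+2)| * 1 :=
              mul_le_mul_of_nonneg_left (abs_x_pow_le h0 h1 _) (abs_nonneg _)
        _ = cc (j+1) - cc (j+2) := by rw [mul_one, abs_ee_succ (j+1)]
      calc ∑ j ∈ Finset.range n, ‖ee (j + 2) * x ^ (j + 2)‖
          ≤ ∑ j ∈ Finset.range n, (cc (j+1) - cc (j+2)) :=
            Finset.sum_le_sum (fun j _ => hle j)
      _ = cc 1 - cc (n+1) := by
            have := Finset.sum_range_sub' (fun i => cc (i+1)) n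
            simpa using this
      _ ≤ 1/2 := by rw [cc_one]; linarith [(cc_pos (n+1)).le]

lemma hasSum_ee {x : ℝ} (h0 : 0 ≤ x) (h1 : x ≤ 1) :
    HasSum (fun j => ee j * x ^ j) (Real.sqrt (1 + x)) := by
  have h0' : -1 ≤ x := by linarith
  have habs := summable_norm_ee_x h0' h1
  have hsum : Summable (fun j => ee j * x ^ j) := habs.of_norm
  set A := ∑' j, ee j * x ^ j with hAdef
  have hprod := hasSum_sum_range_mul_of_summable_norm habs habs
  have hterm : ∀ n, ∑ k ∈ Finset.range (n+1), (ee k * x ^ k) * (ee (n-k) * x ^ (n-k))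
      = VV n * x ^ n := by
    intro n
    rw [VV, Finset.sum_mul]
    apply Finset.sum_congr rfl
    intro k hk
    have hkn : k ≤ n := by
      have := Finset.mem_range.mp hk; omega
    have hx : x ^ k * x ^ (n-k) = x ^ n := by
      rw [← pow_add]; congr 1; omega
    calc (ee k * x ^ k) * (ee (n-k) * x ^ (n-k))
        = (ee k * ee (n-k)) * (x ^ k * x ^ (n-k)) := by ring
    _ = ee k * ee (n-k) * x ^ n := by rw [hx]
  have hprod2 : HasSum (fun n => VV n * x ^ n) (A * A) := by
    rw [show (fun n => VV n * x ^ n)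
        = fun n => ∑ k ∈ Finset.range (n+1), (ee k * x ^ k) * (ee (n-k) * x ^ (n-k)) from
      funext fun n => (hterm n).symm]
    exact hprod
  have hfin : HasSum (fun n => VV n * x ^ n) (1 + x) := by
    have h2 : ∀ n ∉ Finset.range 2, VV n * x ^ n = 0 := by
      intro n hn
      rw [VV_ge_two n (by simp at hn; omega)]
      ring
    have hh := hasSum_sum_of_ne_finset_zero (L := SummationFilter.unconditional ℕ) h2
    convert hh using 1
    rw [Finset.sum_range_succ, Finset.sum_range_one, VV_zero, VV_one]
    ring
  have hAA : A * A = 1 + x := hprod2.unique hfin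
  have htail := tail_bound h0' h1
  have hsplit := Summable.sum_add_tsum_nat_add 2 hsum
  have hA0 : 0 ≤ A := by
    have h2 : ∑ i ∈ Finset.range 2, ee i * x ^ i = 1 + x/2 := by
      rw [Finset.sum_range_succ, Finset.sum_range_one, ee_zero', ee_one']
      ring
    have hA : A = (1 + x/2) + ∑' j, ee (j+2) * x ^ (j+2) := by
      rw [hAdef, ← hsplit, h2]
    have habs' := abs_le.mp htail
    rw [hA]
    linarith
  have hAval : Real.sqrt (1 + x) = A := by
    rw [← hAA, Real.sqrt_mul_self hA0]
  rw [hAval]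
  exact hsum.hasSum


lemma bhalf_one_one : bhalf 1 ((1:ℕ) : ℤ) = 1 := by
  rw [bhalf_nat_eq 1 1 (by omega)]
  norm_num
  exact (Real.Gamma_pos_of_pos (by norm_num)).ne'

lemma bhalf_one_odd (j : ℕ) (hj : 1 ≤ j) : bhalf 1 ((2*j+1 : ℕ) : ℤ) = 0 :=
  bhalf_zero ⟨⟨-(j:ℤ), by push_cast; ring⟩, by push_cast; omega⟩

lemma hasSum_phi_one {t : ℝ} (h0 : -1 ≤ t) (h1 : t ≤ 1) :
    HasSum (fun k : ℕ => bhalf 1 (k : ℤ) * t ^ k) (Real.sqrt (1 + t^2) + t) := by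
  have hx0 : 0 ≤ t^2 := sq_nonneg t
  have hx1 : t^2 ≤ 1 := by nlinarith
  have heven0 := hasSum_ee hx0 hx1
  set gE : ℕ → ℝ := fun k => if Even k then bhalf 1 (k : ℤ) * t ^ k else 0 with hgE
  set gO : ℕ → ℝ := fun k => if k = 1 then t else 0 with hgO
  have hinj : Function.Injective (fun j : ℕ => 2 * j) := by
    intro a b h
    have : 2 * a = 2 * b := h
    omega
  have hvanish : ∀ k ∉ Set.range (fun j : ℕ => 2 * j), gE k = 0 := by
    intro k hk
    have hodd : ¬ Even k := by
      rintro ⟨j, rfl⟩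
      exact hk ⟨j, by simpa using two_mul j⟩
    simp only [hgE, if_neg hodd]
  have hfun : (fun j : ℕ => ee j * (t^2)^j) = (gE ∘ fun j : ℕ => 2 * j) := by
    funext j
    simp only [hgE, Function.comp]
    rw [if_pos ⟨j, two_mul j⟩, ee, pow_mul]
    norm_num
  have hE : HasSum gE (Real.sqrt (1 + t^2)) :=
    (Function.Injective.hasSum_iff hinj hvanish).mp (hfun ▸ heven0)
  have hO : HasSum gO t := hasSum_ite_eq 1 t
  have hadd := hE.add hO
  have hfeq : (fun k : ℕ => gE k + gO k) = (fun k : ℕ => bhalf 1 (k : ℤ) * t ^ k) := by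
    funext k
    rcases Nat.even_or_odd k with hk | hk
    · have hk1 : k ≠ 1 := by rintro rfl; exact (Nat.not_even_iff_odd.2 odd_one) hk
      simp only [hgE, hgO, if_pos hk, if_neg hk1, add_zero]
    · obtain ⟨j, rfl⟩ := hk
      have hne : ¬ Even (2*j+1) := by simp [parity_simps]
      rcases Nat.eq_zero_or_pos j with rfl | hj
      · simp only [hgE, hgO, if_neg hne, if_pos (by norm_num : 2*0+1 = 1), zero_add]
        rw [show ((2*0+1 : ℕ) : ℤ) = ((1:ℕ) : ℤ) by norm_num, bhalf_one_one]
        norm_num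
      · have hk1 : 2*j+1 ≠ 1 := by omega
        simp only [hgE, hgO, if_neg hne, if_neg hk1, add_zero]
        rw [bhalf_one_odd j hj, zero_mul]
  rw [← hfeq]
  exact hadd

lemma hasSum_phi_odd (n : ℕ) {t : ℝ} (h0 : -1 ≤ t) (h1 : t ≤ 1) :
    HasSum (fun k : ℕ => bhalf (2*n+1) (k : ℤ) * t ^ k)
      ((1+t^2)^n * (Real.sqrt (1+t^2)
        + t * ∑ k ∈ Finset.range (n+1), cc k * ((1+t^2)^k)⁻¹)) := by
  induction n with
  | zero =>
    have h := hasSum_phi_one h0 h1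
    simp only [Nat.mul_zero, Nat.zero_add, pow_zero, one_mul,
      Finset.range_one, Finset.sum_singleton, cc_zero, inv_one, mul_one]
    simpa using h
  | succ m ih =>
    set u : ℝ := 1 + t^2 with hu
    have hu0 : (0:ℝ) < u := by positivity
    set S : ℝ := u^m * (Real.sqrt u + t * ∑ k ∈ Finset.range (m+1), cc k * (u^k)⁻¹) with hS
    have key : ∀ k : ℕ, bhalf (2*(m+1)+1) (k:ℤ) * t^k
        = bhalf (2*m+1) (k:ℤ) * t^k + bhalf (2*m+1) ((k:ℤ)-2) * t^k := by
      intro k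
      rw [show 2*(m+1)+1 = 2*m+3 by ring, pascal m k]
      ring
    have hg2 : HasSum (fun k : ℕ => bhalf (2*m+1) (((k+2 : ℕ) : ℤ)-2) * t^(k+2)) (t^2 * S) := by
      have heq : (fun k : ℕ => bhalf (2*m+1) (((k+2 : ℕ) : ℤ)-2) * t^(k+2))
          = (fun k : ℕ => t^2 * (bhalf (2*m+1) (k:ℤ) * t^k)) := by
        funext k
        have e : ((k+2 : ℕ) : ℤ) - 2 = (k : ℤ) := by push_cast; ring
        rw [e]; ring
      rw [heq]
      exact ih.mul_left (t^2)
    have hg : HasSum (fun k : ℕ => bhalf (2*m+1) ((k:ℤ)-2) * t^k)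
        (t^2 * S + cc (m+1) * t) := by
      have h2 := (hasSum_nat_add_iff (f := fun k : ℕ => bhalf (2*m+1) ((k:ℤ)-2) * t^k) 2).mp hg2
      have hsum2 : ∑ i ∈ Finset.range 2, bhalf (2*m+1) ((i:ℤ)-2) * t^i = cc (m+1) * t := by
        rw [Finset.sum_range_succ, Finset.sum_range_one]
        rw [show ((0:ℕ):ℤ)-2 = -2 by norm_num, show ((1:ℕ):ℤ)-2 = -1 by norm_num,
          bhalf_neg_two, bhalf_neg_one]
        ring
      rw [hsum2] at h2
      exact h2
    have hcomb := ih.add hg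
    have hval : S + (t^2 * S + cc (m+1) * t)
        = u^(m+1) * (Real.sqrt u + t * ∑ k ∈ Finset.range (m+2), cc k * (u^k)⁻¹) := by
      rw [Finset.sum_range_succ (fun k => cc k * (u^k)⁻¹) (m+1)]
      have hup : u^(m+1) ≠ 0 := by positivity
      rw [hS]
      field_simp
      ring
    rw [hval] at hcomb
    have hfeq : (fun k : ℕ => bhalf (2*(m+1)+1) (k:ℤ) * t^k)
        = (fun k : ℕ => bhalf (2*m+1) (k:ℤ) * t^k + bhalf (2*m+1) ((k:ℤ)-2) * t^k) :=
      funext key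
    rw [hfeq]
    exact hcomb

end PhiAux


theorem phi_odd_closed_form (n : ℕ) (t : ℝ) (ht1 : -1 ≤ t) (ht2 : t ≤ 1) :
    phi (2 * n + 1) t = (1 + t ^ 2) ^ n *
      (Real.sqrt (1 + t ^ 2) +
        t * ∑ k ∈ Finset.range (n + 1),
          ((Nat.choose (2 * k) k : ℝ) / 4 ^ k) * ((1 + t ^ 2) ^ k)⁻¹) := by

  have h := (PhiAux.hasSum_phi_odd n ht1 ht2).tsum_eq
  rw [phi, h]
  rfl
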